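/- Let μ > 0 and let p ∈ V_μ. Then ‖p − δ_0‖_{ℓ¹} ≤ 2 √μ · √(1 − G[p]), where δ_0 = (1,0,0,...) is the Dirac distribution on ℕ concentrated at 0. In particular, ‖p − δ_0‖_{ℓ¹} → 0 whenever G[p] → 1. -/

import Mathlib

/-- Cumulative distribution function of a pmf on ℕ: `F n = ∑_{m ≤ n} p m`. -/
noncomputable def cdf (p : ℕ → ℝ) (n : ℕ) : ℝ := ∑ m ∈ Finset.range (n + 1), p m

/-- Wasserstein-1 distance between two pmfs on ℕ, `W1(p,q) = ∑_{n ≥ 0} |F_n - H_n|`. -/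
noncomputable def W1 (p q : ℕ → ℝ) : ℝ := ∑' n : ℕ, |cdf p n - cdf q n|

/-- Gini index of a pmf on ℕ with mean μ: `G[p] = (1/(2μ)) ∑_i ∑_j |i-j| p_i p_j`. -/
noncomputable def Gini (μ : ℝ) (p : ℕ → ℝ) : ℝ :=
  (1 / (2 * μ)) * ∑' i : ℕ, ∑' j : ℕ, |(i : ℝ) - (j : ℝ)| * p i * p j

/-- The shifted Bernoulli distribution with mean μ:
`p*_{⌊μ⌋} = 1 - μ + ⌊μ⌋`, `p*_{⌊μ⌋+1} = μ - ⌊μ⌋`, `p*_n = 0` otherwise. -/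
noncomputable def pstar (μ : ℝ) : ℕ → ℝ := fun n =>
  if n = ⌊μ⌋₊ then 1 - μ + (⌊μ⌋₊ : ℝ)
  else if n = ⌊μ⌋₊ + 1 then μ - (⌊μ⌋₊ : ℝ)
  else 0

/-- The Dirac distribution on ℕ concentrated at `k`. -/
noncomputable def dirac (k : ℕ) : ℕ → ℝ := fun n => if n = k then 1 else 0

theorem stmt_2 (μ : ℝ) (hμ : 0 < μ) (p : ℕ → ℝ)
    (hpos : ∀ n, 0 ≤ p n) (hsum : HasSum p 1)
    (hmean : HasSum (fun n : ℕ => (n : ℝ) * p n) μ) :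
    (∑' n : ℕ, |p n - dirac 0 n|) ≤ 2 * Real.sqrt μ * Real.sqrt (1 - Gini μ p) := by
  have hp := hsum.summable
  have hnp := hmean.summable
  have hp1 : ∑' n, p n = 1 := hsum.tsum_eq
  have hm : ∑' n : ℕ, (n : ℝ) * p n = μ := hmean.tsum_eq
  have hp0le : p 0 ≤ 1 := le_hasSum hsum 0 (fun i _ => hpos i)
  set q : ℕ → ℝ := fun n => if n = 0 then 0 else p n with hq_def
  have hq_nonneg : ∀ n, 0 ≤ q n := fun n => by
    simp only [hq_def]; split <;> [rfl; exact hpos n]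
  have hq_le : ∀ n, q n ≤ p n := fun n => by
    simp only [hq_def]; split <;> [exact hpos n; exact le_rfl]
  have hq_sum : Summable q := Summable.of_nonneg_of_le hq_nonneg hq_le hp
  have hptail : ∑' n, p (n + 1) = 1 - p 0 := by
    have := Summable.tsum_eq_zero_add hp
    rw [hp1] at this; linarith
  have hq_tsum : ∑' n, q n = 1 - p 0 := by
    rw [Summable.tsum_eq_zero_add hq_sum]
    simp only [hq_def]
    simpa using hptail
  -- pointwise key inequality
  have key : ∀ i j : ℕ, |(i : ℝ) - (j : ℝ)| * p i * p j + 2 * (q i * q j)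
      ≤ ((i : ℝ) + (j : ℝ)) * p i * p j := by
    intro i j
    have hpij : 0 ≤ p i * p j := mul_nonneg (hpos i) (hpos j)
    rcases Nat.eq_zero_or_pos i with hi | hi
    · subst hi
      have : |(0 : ℝ) - (j : ℝ)| = (j : ℝ) := by
        rw [zero_sub, abs_neg, abs_of_nonneg (Nat.cast_nonneg j)]
      simp only [hq_def, Nat.cast_zero, this]
      simp
    rcases Nat.eq_zero_or_pos j with hj | hj
    · subst hj
      have : |(i : ℝ) - (0 : ℝ)| = (i : ℝ) := by
        rw [sub_zero, abs_of_nonneg (Nat.cast_nonneg i)]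
      simp only [hq_def, Nat.cast_zero, this]
      simp
    · have hi' : (1 : ℝ) ≤ (i : ℝ) := by exact_mod_cast hi
      have hj' : (1 : ℝ) ≤ (j : ℝ) := by exact_mod_cast hj
      have habs : |(i : ℝ) - (j : ℝ)| ≤ (i : ℝ) + (j : ℝ) - 2 :=
        abs_le.mpr ⟨by linarith, by linarith⟩
      have hqi : q i = p i := by simp [hq_def, hi.ne']
      have hqj : q j = p j := by simp [hq_def, hj.ne']
      rw [hqi, hqj]
      nlinarith [mul_le_mul_of_nonneg_right habs hpij]
  -- summability of the comparison function
  have hB : ∀ i : ℕ, Summable (fun j : ℕ => ((i : ℝ) + (j : ℝ)) * p i * p j) := by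
    intro i
    have : Summable (fun j : ℕ => ((i : ℝ) * p i) * p j + p i * ((j : ℝ) * p j)) :=
      (hp.mul_left _).add (hnp.mul_left _)
    exact this.congr (fun j => by ring)
  have hBsum : ∀ i : ℕ, ∑' j : ℕ, ((i : ℝ) + (j : ℝ)) * p i * p j = (i : ℝ) * p i + μ * p i := by
    intro i
    have h1 : ∑' j : ℕ, (((i : ℝ) * p i) * p j + p i * ((j : ℝ) * p j))
        = ((i : ℝ) * p i) * ∑' j : ℕ, p j + p i * ∑' j : ℕ, (j : ℝ) * p j := by
      rw [Summable.tsum_add (hp.mul_left ((i : ℝ) * p i)) (hnp.mul_left (p i)),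
        tsum_mul_left, tsum_mul_left]
    calc ∑' j : ℕ, ((i : ℝ) + (j : ℝ)) * p i * p j
        = ∑' j : ℕ, (((i : ℝ) * p i) * p j + p i * ((j : ℝ) * p j)) := by
          apply tsum_congr; intro j; ring
      _ = (i : ℝ) * p i + μ * p i := by rw [h1, hp1, hm]; ring
  have habs_le : ∀ i j : ℕ, |(i : ℝ) - (j : ℝ)| * p i * p j
      ≤ ((i : ℝ) + (j : ℝ)) * p i * p j := by
    intro i j
    have hpij : 0 ≤ p i * p j := mul_nonneg (hpos i) (hpos j)
    have : |(i : ℝ) - (j : ℝ)| ≤ (i : ℝ) + (j : ℝ) :=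
      abs_le.mpr ⟨by linarith [Nat.cast_nonneg (α := ℝ) i, Nat.cast_nonneg (α := ℝ) j],
        by linarith [Nat.cast_nonneg (α := ℝ) i, Nat.cast_nonneg (α := ℝ) j]⟩
    calc |(i : ℝ) - (j : ℝ)| * p i * p j = |(i : ℝ) - (j : ℝ)| * (p i * p j) := by ring
      _ ≤ ((i : ℝ) + (j : ℝ)) * (p i * p j) := mul_le_mul_of_nonneg_right this hpij
      _ = ((i : ℝ) + (j : ℝ)) * p i * p j := by ring
  have habs_nonneg : ∀ i j : ℕ, 0 ≤ |(i : ℝ) - (j : ℝ)| * p i * p j := fun i j =>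
    mul_nonneg (mul_nonneg (abs_nonneg _) (hpos i)) (hpos j)
  have hA : ∀ i : ℕ, Summable (fun j : ℕ => |(i : ℝ) - (j : ℝ)| * p i * p j) := fun i =>
    Summable.of_nonneg_of_le (habs_nonneg i) (habs_le i) (hB i)
  have hqq : ∀ i : ℕ, Summable (fun j : ℕ => 2 * (q i * q j)) := fun i => by
    simpa [mul_assoc] using (hq_sum.mul_left (2 * q i))
  have hqq_tsum : ∀ i : ℕ, ∑' j : ℕ, 2 * (q i * q j) = 2 * q i * (1 - p 0) := by
    intro i
    calc ∑' j : ℕ, 2 * (q i * q j) = ∑' j : ℕ, (2 * q i) * q j := by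
          apply tsum_congr; intro j; ring
      _ = (2 * q i) * ∑' j : ℕ, q j := tsum_mul_left
      _ = 2 * q i * (1 - p 0) := by rw [hq_tsum]
  -- inner bound
  have hinner : ∀ i : ℕ, (∑' j : ℕ, |(i : ℝ) - (j : ℝ)| * p i * p j) + 2 * q i * (1 - p 0)
      ≤ (i : ℝ) * p i + μ * p i := by
    intro i
    have h1 : ∑' j : ℕ, (|(i : ℝ) - (j : ℝ)| * p i * p j + 2 * (q i * q j))
        ≤ ∑' j : ℕ, ((i : ℝ) + (j : ℝ)) * p i * p j :=
      Summable.tsum_le_tsum (key i) ((hA i).add (hqq i)) (hB i)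
    rw [Summable.tsum_add (hA i) (hqq i), hqq_tsum i, hBsum i] at h1
    exact h1
  set S : ℕ → ℝ := fun i => ∑' j : ℕ, |(i : ℝ) - (j : ℝ)| * p i * p j with hS_def
  have hS_nonneg : ∀ i, 0 ≤ S i := fun i => tsum_nonneg (habs_nonneg i)
  have hRHS_sum : Summable (fun i : ℕ => (i : ℝ) * p i + μ * p i) :=
    hnp.add (hp.mul_left μ)
  have hS_le : ∀ i, S i ≤ (i : ℝ) * p i + μ * p i := by
    intro i
    rw [← hBsum i]
    exact Summable.tsum_le_tsum (habs_le i) (hA i) (hB i)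
  have hS_sum : Summable S := Summable.of_nonneg_of_le hS_nonneg hS_le hRHS_sum
  have hq2_sum : Summable (fun i : ℕ => 2 * q i * (1 - p 0)) := by
    have := (hq_sum.mul_left 2).mul_right (1 - p 0)
    simpa [mul_assoc, mul_comm] using this
  have houter : (∑' i : ℕ, S i) + 2 * (1 - p 0) * (1 - p 0) ≤ 2 * μ := by
    have h1 : ∑' i : ℕ, (S i + 2 * q i * (1 - p 0)) ≤ ∑' i : ℕ, ((i : ℝ) * p i + μ * p i) :=
      Summable.tsum_le_tsum hinner (hS_sum.add hq2_sum) hRHS_sum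
    rw [Summable.tsum_add hS_sum hq2_sum, Summable.tsum_add hnp (hp.mul_left μ), hm, tsum_mul_left, hp1] at h1
    have h2 : ∑' i : ℕ, 2 * q i * (1 - p 0) = 2 * (1 - p 0) * (1 - p 0) := by
      calc ∑' i : ℕ, 2 * q i * (1 - p 0) = ∑' i : ℕ, (2 * (1 - p 0)) * q i := by
            apply tsum_congr; intro i; ring
        _ = (2 * (1 - p 0)) * ∑' i : ℕ, q i := tsum_mul_left
        _ = 2 * (1 - p 0) * (1 - p 0) := by rw [hq_tsum]
    rw [h2] at h1
    linarith
  -- relate to Gini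
  have hGini : (1 - p 0) ^ 2 ≤ μ * (1 - Gini μ p) := by
    have hGeq : Gini μ p = (1 / (2 * μ)) * ∑' i : ℕ, S i := rfl
    have hμ' : μ ≠ 0 := ne_of_gt hμ
    have : μ * (1 - Gini μ p) = μ - (∑' i : ℕ, S i) / 2 := by
      rw [hGeq]; field_simp
    rw [this]
    nlinarith [houter]
  -- compute LHS
  have hd_sum : Summable (dirac 0) := by
    have : HasSum (dirac 0) 1 := by
      exact hasSum_ite_eq (0 : ℕ) (1 : ℝ)
    exact this.summable
  have hsub_sum : Summable (fun n => |p n - dirac 0 n|) := (hp.sub hd_sum).abs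
  have hLHS : ∑' n, |p n - dirac 0 n| = 2 * (1 - p 0) := by
    rw [Summable.tsum_eq_zero_add hsub_sum]
    have h0 : |p 0 - dirac 0 0| = 1 - p 0 := by
      have hd : dirac 0 0 = 1 := by simp [dirac]
      rw [hd, abs_of_nonpos (by linarith), neg_sub]
    have hrest : ∀ n : ℕ, |p (n + 1) - dirac 0 (n + 1)| = p (n + 1) := by
      intro n
      simp only [dirac, if_neg (Nat.succ_ne_zero n), sub_zero]
      exact abs_of_nonneg (hpos _)
    rw [h0]
    rw [tsum_congr hrest, hptail]
    ring
  rw [hLHS]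
  -- final step with square roots
  have h1p0 : (0 : ℝ) ≤ 1 - p 0 := by linarith
  have hfin : 1 - p 0 ≤ Real.sqrt μ * Real.sqrt (1 - Gini μ p) := by
    rw [← Real.sqrt_mul hμ.le]
    calc 1 - p 0 = Real.sqrt ((1 - p 0) ^ 2) := (Real.sqrt_sq h1p0).symm
      _ ≤ Real.sqrt (μ * (1 - Gini μ p)) := Real.sqrt_le_sqrt hGini
  linarith
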